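/- Under the Kähler cvc(1) package described in the context, if dim V ≥ 4, then A∘J = J∘A. -/

import Mathlib

open scoped RealInnerProductSpace


/-- Pointwise proportional linear maps are globally proportional. -/
theorem aux_prop_const {V : Type*} [AddCommGroup V] [Module ℝ V]
    (T S : V →ₗ[ℝ] V) (hS : Function.Injective S)
    (h : ∀ v : V, ∃ c : ℝ, T v = c • S v) (v₀ : V) (hv₀ : v₀ ≠ 0) :
    ∃ c : ℝ, ∀ v : V, T v = c • S v := by
  obtain ⟨c₀, hc₀⟩ := h v₀
  refine ⟨c₀, fun w => ?_⟩
  by_cases hw : ∃ t : ℝ, w = t • v₀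
  · obtain ⟨t, rfl⟩ := hw
    rw [map_smul, map_smul, hc₀, smul_comm]
  · obtain ⟨cw, hcw⟩ := h w
    obtain ⟨c', hc'⟩ := h (v₀ + w)
    rw [map_add, map_add, hc₀, hcw, smul_add] at hc'
    have key : S ((c₀ - c') • v₀ + (cw - c') • w) = 0 := by
      rw [map_add, map_smul, map_smul]
      linear_combination (norm := module) hc'
    have h0 : (c₀ - c') • v₀ + (cw - c') • w = 0 := hS (by rw [key, map_zero])
    have hcwc' : cw = c' := by
      by_contra hne
      apply hw
      have hne' : cw - c' ≠ 0 := sub_ne_zero.mpr hne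
      have h1 : (cw - c') • w = -((c₀ - c') • v₀) := by
        linear_combination (norm := module) h0
      refine ⟨(cw - c')⁻¹ * (-(c₀ - c')), ?_⟩
      calc w = (cw - c')⁻¹ • ((cw - c') • w) := (inv_smul_smul₀ hne' w).symm
        _ = (cw - c')⁻¹ • (-((c₀ - c') • v₀)) := by rw [h1]
        _ = ((cw - c')⁻¹ * (-(c₀ - c'))) • v₀ := by module
    rw [hcwc'] at h0
    simp only [sub_self, zero_smul, add_zero] at h0
    have hc0c' : c₀ - c' = 0 := by
      by_contra hne
      exact hv₀ (by simpa [hne] using smul_eq_zero.mp h0)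
    have : c₀ = c' := by linarith
    rw [hcw, hcwc', this]


theorem aux_curv_contra
    {V : Type*} [NormedAddCommGroup V] [InnerProductSpace ℝ V] [FiniteDimensional ℝ V]
    (hdim : 4 ≤ Module.finrank ℝ V)
    (J : V →ₗ[ℝ] V)
    (hJiso : ∀ x y : V, ⟪J x, J y⟫ = ⟪x, y⟫)
    (hJ2 : ∀ x : V, J (J x) = -x)
    (R : V →ₗ[ℝ] V →ₗ[ℝ] V →ₗ[ℝ] V →ₗ[ℝ] ℝ)
    (hskew : ∀ X Y Z W : V, R X Y Z W = - R Y X Z W)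
    (hpair : ∀ X Y Z W : V, R X Y Z W = R Z W X Y)
    (hbianchi : ∀ X Y Z W : V, R X Y Z W + R Y Z X W + R Z X Y W = 0)
    (hkahler : ∀ X Y Z W : V, R (J X) (J Y) Z W = R X Y Z W)
    (hsec : ∀ x y : V, ‖x‖ = 1 → ‖y‖ = 1 → ⟪x, y⟫ = 0 → 1 ≤ R y x x y)
    (Hall : ∀ v : V, ‖v‖ = 1 → ∀ u : V, R (J v) v v u = ⟪J v, u⟫) : False := by
  -- J is skew
  have hJskew : ∀ x y : V, ⟪J x, y⟫ = -⟪x, J y⟫ := by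
    intro x y
    have : ⟪J x, J (J y)⟫ = ⟪x, J y⟫ := hJiso x (J y)
    rw [hJ2 y, inner_neg_right] at this
    linarith
  -- unit vector x
  have hnt : Nontrivial V := by
    have : 0 < Module.finrank ℝ V := by omega
    exact Module.nontrivial_of_finrank_pos this
  obtain ⟨x', hx'⟩ := exists_ne (0 : V)
  set x : V := ‖x'‖⁻¹ • x' with hxdef
  have hx1 : ‖x‖ = 1 := norm_smul_inv_norm hx'
  -- find y ⊥ x, Jx
  obtain ⟨y', hy'mem, hy'0⟩ : ∃ y' : V, (⟪x, y'⟫ = 0 ∧ ⟪J x, y'⟫ = 0) ∧ y' ≠ 0 := by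
    classical
    let f : V →ₗ[ℝ] ℝ × ℝ :=
      LinearMap.prod ((innerSL ℝ x).toLinearMap) ((innerSL ℝ (J x)).toLinearMap)
    have hker : LinearMap.ker f ≠ ⊥ := by
      intro hk
      have hinj : Function.Injective f := LinearMap.ker_eq_bot.mp hk
      have := LinearMap.finrank_le_finrank_of_injective hinj
      simp [Module.finrank_prod] at this
      omega
    obtain ⟨y', hy'mem, hy'0⟩ := Submodule.exists_mem_ne_zero_of_ne_bot hker
    refine ⟨y', ?_, hy'0⟩
    have := LinearMap.mem_ker.mp hy'mem
    have h1 := congrArg Prod.fst this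
    have h2 := congrArg Prod.snd this
    exact ⟨h1, h2⟩
  set y : V := ‖y'‖⁻¹ • y' with hydef
  have hy1 : ‖y‖ = 1 := norm_smul_inv_norm hy'0
  have hxy : ⟪x, y⟫ = 0 := by
    rw [hydef, real_inner_smul_right, hy'mem.1, mul_zero]
  have hJxy : ⟪J x, y⟫ = 0 := by
    rw [hydef, real_inner_smul_right, hy'mem.2, mul_zero]
  -- inner product values
  have hxx : ⟪x, x⟫ = 1 := by rw [real_inner_self_eq_norm_mul_norm, hx1]; ring
  have hyy : ⟪y, y⟫ = 1 := by rw [real_inner_self_eq_norm_mul_norm, hy1]; ring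
  have hyx : ⟪y, x⟫ = 0 := by rw [real_inner_comm]; exact hxy
  have hxJy : ⟪x, J y⟫ = 0 := by
    have := hJskew x y; linarith [hJxy, this]
  have hJxJy : ⟪J x, J y⟫ = 0 := by rw [hJiso]; exact hxy
  have hJyJy : ⟪J y, J y⟫ = 1 := by rw [hJiso]; exact hyy
  have hJy1 : ‖J y‖ = 1 := by
    have h := real_inner_self_eq_norm_mul_norm (J y)
    rw [hJyJy] at h
    have h2 := mul_self_eq_one_iff.mp h.symm
    rcases h2 with h2 | h2
    · exact h2
    · nlinarith [norm_nonneg (J y)]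
  -- scaled version of Hall
  have Hs : ∀ v u : V, R (J v) v v u = ⟪v, v⟫ * ⟪J v, u⟫ := by
    intro v u
    by_cases hv : v = 0
    · simp [hv]
    · have hv1 : ‖(‖v‖⁻¹ • v)‖ = 1 := norm_smul_inv_norm hv
      have h := Hall (‖v‖⁻¹ • v) hv1 u
      have hn : ‖v‖ ≠ 0 := norm_ne_zero_iff.mpr hv
      simp only [map_smul, LinearMap.smul_apply, real_inner_smul_left, smul_eq_mul] at h
      have hvv : ⟪v, v⟫ = ‖v‖ * ‖v‖ := real_inner_self_eq_norm_mul_norm v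
      field_simp at h
      rw [hvv]
      have hq : (R (J v) v v u) * ‖v‖ = (‖v‖ * ‖v‖ * ⟪J v, u⟫) * ‖v‖ := by
        linear_combination ‖v‖ * h
      exact mul_right_cancel₀ hn hq
  -- move J across first two slots with a sign
  have moveJ : ∀ a b c d : V, R (J a) b c d = - R a (J b) c d := by
    intro a b c d
    have hb : J (-(J b)) = b := by rw [map_neg, hJ2, neg_neg]
    calc R (J a) b c d = R (J a) (J (-(J b))) c d := by rw [hb]
      _ = R a (-(J b)) c d := hkahler _ _ _ _
      _ = - R a (J b) c d := by rw [map_neg]; simp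
  -- Kähler identity in last two slots
  have hk2 : ∀ a b c d : V, R a b (J c) (J d) = R a b c d := by
    intro a b c d
    rw [hpair, hkahler, ← hpair]
  -- key equations
  have h1 := Hs (x + y) (J y)
  have h2 := Hs (x - y) (J y)
  simp only [map_add, map_sub, LinearMap.add_apply, LinearMap.sub_apply,
    inner_add_left, inner_add_right, inner_sub_left, inner_sub_right,
    hxx, hyy, hxy, hyx, hJxJy, hJyJy] at h1 h2
  have hsub : ∀ a b c : V, R (J x - J y) a b c = R (J x) a b c - R (J y) a b c := by
    intro a b c
    rw [sub_eq_add_neg, ← neg_one_smul ℝ (J y), map_add, map_smul R (-1 : ℝ) (J y)]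
    simp only [LinearMap.add_apply, LinearMap.smul_apply, smul_eq_mul]; ring
  simp only [hsub] at h2
  have hyE : R (J y) y y (J y) = 1 := by
    rw [Hs y (J y), hyy, hJyJy]; ring
  -- e2 : R (Jx) y x (Jy) = R (Jy) x x (Jy)
  have e2 : R (J x) y x (J y) = R (J y) x x (J y) := by
    rw [moveJ x y x (J y)]
    rw [hskew x (J y) x (J y)]
    ring
  -- e3 via Bianchi
  have hB := hbianchi (J x) x y (J y)
  have t2 : R x y (J x) (J y) = - R y x x y := by
    rw [hk2 x y x y]
    exact hskew x y x y
  have t3 : R y (J x) x (J y) = - R (J y) x x (J y) := by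
    rw [hskew y (J x) x (J y), e2]
  -- sec bounds
  have hsec1 : 1 ≤ R y x x y := hsec x y hx1 hy1 hxy
  have hsec2 : 1 ≤ R (J y) x x (J y) := hsec x (J y) hx1 hJy1 hxJy
  linarith [h1, h2, hB, t2, t3, hyE, hsec1, hsec2, e2]

/-- In the Kähler cvc(1) package with `dim V ≥ 4`, `A∘J = J∘A`. -/
theorem stmt_13
    {V : Type*} [NormedAddCommGroup V] [InnerProductSpace ℝ V] [FiniteDimensional ℝ V]
    (hdim : 4 ≤ Module.finrank ℝ V)
    (J : V →ₗ[ℝ] V)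
    (hJiso : ∀ x y : V, ⟪J x, J y⟫ = ⟪x, y⟫)
    (hJ2 : ∀ x : V, J (J x) = -x)
    (R : V →ₗ[ℝ] V →ₗ[ℝ] V →ₗ[ℝ] V →ₗ[ℝ] ℝ)
    (hskew : ∀ X Y Z W : V, R X Y Z W = - R Y X Z W)
    (hpair : ∀ X Y Z W : V, R X Y Z W = R Z W X Y)
    (hbianchi : ∀ X Y Z W : V, R X Y Z W + R Y Z X W + R Z X Y W = 0)
    (hkahler : ∀ X Y Z W : V, R (J X) (J Y) Z W = R X Y Z W)
    (hsec : ∀ x y : V, ‖x‖ = 1 → ‖y‖ = 1 → ⟪x, y⟫ = 0 → 1 ≤ R y x x y)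
    (A : V →ₗ[ℝ] V) (hAinv : Function.Bijective A)
    (hAskew : ∀ x y : V, ⟪A x, y⟫ = -⟪x, A y⟫)
    (hE : ∀ v : V, ‖v‖ = 1 → ∀ w : V,
      (⟪w, v⟫ = 0 ∧ ∀ u : V, R w v v u = ⟪w, u⟫) ↔
        w ∈ (Submodule.span ℝ {v, A v})ᗮ) :
    A ∘ₗ J = J ∘ₗ A := by
  have hJskew : ∀ x y : V, ⟪J x, y⟫ = -⟪x, J y⟫ := by
    intro x y
    have : ⟪J x, J (J y)⟫ = ⟪x, J y⟫ := hJiso x (J y)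
    rw [hJ2 y, inner_neg_right] at this
    linarith
  have hJinj : Function.Injective J := by
    intro a b hab
    have : J (J a) = J (J b) := by rw [hab]
    rw [hJ2, hJ2, neg_inj] at this
    exact this
  -- perp characterization
  have perp_iff : ∀ a b w : V,
      w ∈ (Submodule.span ℝ {a, b})ᗮ ↔ ⟪a, w⟫ = 0 ∧ ⟪b, w⟫ = 0 := by
    intro a b w
    rw [Submodule.mem_orthogonal]
    constructor
    · intro h
      exact ⟨h a (Submodule.subset_span (by simp)),
             h b (Submodule.subset_span (by simp))⟩
    · rintro ⟨h1, h2⟩ u hu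
      obtain ⟨cc, dd, rfl⟩ := Submodule.mem_span_pair.mp hu
      rw [inner_add_left, real_inner_smul_left, real_inner_smul_left, h1, h2]
      ring
  have hAself : ∀ v : V, ⟪A v, v⟫ = 0 := by
    intro v
    have h := hAskew v v
    have h2 := real_inner_comm (A v) v
    linarith
  have hJnorm : ∀ v : V, ‖v‖ = 1 → ‖J v‖ = 1 := by
    intro v hv
    have h := real_inner_self_eq_norm_mul_norm (J v)
    rw [hJiso, real_inner_self_eq_norm_mul_norm, hv] at h
    have h2 := mul_self_eq_one_iff.mp (by linarith : ‖J v‖ * ‖J v‖ = 1)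
    rcases h2 with h2 | h2
    · exact h2
    · nlinarith [norm_nonneg (J v)]
  -- Step A : for unit v, A (J v) = c • J (A v)
  have stepA : ∀ v : V, ‖v‖ = 1 → ∃ c : ℝ, A (J v) = c • J (A v) := by
    intro v hv
    have hJv1 : ‖J v‖ = 1 := hJnorm v hv
    -- claim: anything perp to Jv and J(Av) is perp to A(Jv)
    have claim1 : ∀ z : V, ⟪J v, z⟫ = 0 → ⟪J (A v), z⟫ = 0 → ⟪A (J v), z⟫ = 0 := by
      intro z hz1 hz2
      set xx : V := -(J z) with hxxdef
      have hJxx : J xx = z := by rw [hxxdef, map_neg, hJ2, neg_neg]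
      have hxv : ⟪xx, v⟫ = 0 := by
        rw [hxxdef, inner_neg_left]
        have h2 := hJskew z v
        have h3 := real_inner_comm (J v) z
        linarith
      have hxAv : ⟪xx, A v⟫ = 0 := by
        rw [hxxdef, inner_neg_left]
        have h2 := hJskew z (A v)
        have h3 := real_inner_comm (J (A v)) z
        linarith
      have hxxE : xx ∈ (Submodule.span ℝ {v, A v})ᗮ := by
        rw [perp_iff]
        constructor
        · rw [real_inner_comm]; exact hxv
        · rw [real_inner_comm]; exact hxAv
      obtain ⟨hxv', hxR⟩ := (hE v hv xx).mpr hxxE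
      -- show z satisfies the E-condition at J v
      have hzE : ⟪z, J v⟫ = 0 ∧ ∀ u : V, R z (J v) (J v) u = ⟪z, u⟫ := by
        constructor
        · rw [real_inner_comm]; exact hz1
        · intro u
          have hu : J (-(J u)) = u := by rw [map_neg, hJ2, neg_neg]
          have hk2 : ∀ a b c d : V, R a b (J c) (J d) = R a b c d := by
            intro a b c d
            rw [hpair, hkahler, ← hpair]
          calc R z (J v) (J v) u
              = R (J xx) (J v) (J v) (J (-(J u))) := by rw [hJxx, hu]
            _ = R xx v (J v) (J (-(J u))) := by rw [hkahler]
            _ = R xx v v (-(J u)) := by rw [hk2]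
            _ = - R xx v v (J u) := by rw [map_neg]
            _ = - ⟪xx, J u⟫ := by rw [hxR (J u)]
            _ = ⟪z, u⟫ := by
                rw [hxxdef, inner_neg_left, neg_neg, hJiso]
      have hzmem := (hE (J v) hJv1 z).mp hzE
      have := ((perp_iff (J v) (A (J v)) z).mp hzmem).2
      exact this
    -- hence A (J v) ∈ span {J v, J (A v)}
    have memb : A (J v) ∈ Submodule.span ℝ {J v, J (A v)} := by
      rw [← Submodule.orthogonal_orthogonal (Submodule.span ℝ {J v, J (A v)})]
      rw [Submodule.mem_orthogonal]
      intro z hz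
      obtain ⟨h1, h2⟩ := (perp_iff _ _ _).mp hz
      rw [real_inner_comm]
      exact claim1 z h1 h2
    obtain ⟨a, b, hab⟩ := Submodule.mem_span_pair.mp memb
    have hinner : ⟪a • J v + b • J (A v), J v⟫ = 0 := by
      rw [hab]
      have := hAself (J v)
      exact this
    rw [inner_add_left, real_inner_smul_left, real_inner_smul_left] at hinner
    have hJvJv : ⟪J v, J v⟫ = 1 := by
      rw [hJiso, real_inner_self_eq_norm_mul_norm, hv]; ring
    have hJAvJv : ⟪J (A v), J v⟫ = 0 := by
      rw [hJiso]
      exact hAself v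
    rw [hJvJv, hJAvJv] at hinner
    have ha : a = 0 := by linarith
    refine ⟨b, ?_⟩
    rw [← hab, ha]
    simp
  -- Step B : scaling
  have hprop : ∀ v : V, ∃ c : ℝ, A (J v) = c • J (A v) := by
    intro v
    by_cases hv : v = 0
    · exact ⟨0, by simp [hv]⟩
    · have hn : ‖v‖ ≠ 0 := norm_ne_zero_iff.mpr hv
      obtain ⟨b, hb⟩ := stepA (‖v‖⁻¹ • v) (norm_smul_inv_norm hv)
      refine ⟨b, ?_⟩
      have hb' : ‖v‖⁻¹ • A (J v) = b • (‖v‖⁻¹ • J (A v)) := by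
        simpa [map_smul] using hb
      calc A (J v) = ‖v‖ • (‖v‖⁻¹ • A (J v)) := (smul_inv_smul₀ hn _).symm
        _ = ‖v‖ • (b • (‖v‖⁻¹ • J (A v))) := by rw [hb']
        _ = b • (‖v‖ • (‖v‖⁻¹ • J (A v))) := by rw [smul_comm]
        _ = b • J (A v) := by rw [smul_inv_smul₀ hn]
  -- Step C : global constant
  have hnt : Nontrivial V := by
    have : 0 < Module.finrank ℝ V := by omega
    exact Module.nontrivial_of_finrank_pos this
  obtain ⟨v₀, hv₀⟩ := exists_ne (0 : V)
  have hSinj : Function.Injective (J ∘ₗ A) := by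
    intro a b hab
    exact hAinv.1 (hJinj hab)
  obtain ⟨c, hc⟩ := aux_prop_const (A ∘ₗ J) (J ∘ₗ A) hSinj
    (by intro v; obtain ⟨cv, hcv⟩ := hprop v
        exact ⟨cv, by simpa [LinearMap.comp_apply] using hcv⟩) v₀ hv₀
  simp only [LinearMap.comp_apply] at hc
  -- Step D : c² = 1
  obtain ⟨y₀, hy₀⟩ := exists_ne (0 : V)
  have hSy0 : J (A y₀) ≠ 0 := by
    intro h
    exact hy₀ (hAinv.1 (hJinj (by rw [h, map_zero, map_zero])))
  set x₀ : V := J (A y₀) with hx₀def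
  have hpos : (0:ℝ) < ⟪x₀, J (A y₀)⟫ := by
    rw [← hx₀def, real_inner_self_eq_norm_mul_norm]
    have h0 : 0 < ‖x₀‖ := norm_pos_iff.mpr hSy0
    exact mul_pos h0 h0
  have key1 : ⟪x₀, J (A y₀)⟫ = c * ⟪J (A x₀), y₀⟫ := by
    have h1 : ⟪A (J x₀), y₀⟫ = -⟪J x₀, A y₀⟫ := hAskew (J x₀) y₀
    have h2 : ⟪J x₀, A y₀⟫ = -⟪x₀, J (A y₀)⟫ := hJskew x₀ (A y₀)
    have h3 : ⟪A (J x₀), y₀⟫ = c * ⟪J (A x₀), y₀⟫ := by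
      rw [hc x₀, real_inner_smul_left]
    linarith
  have key2 : ⟪J (A x₀), y₀⟫ = c * ⟪x₀, J (A y₀)⟫ := by
    have h1 : ⟪J (A x₀), y₀⟫ = -⟪A x₀, J y₀⟫ := hJskew (A x₀) y₀
    have h2 : ⟪A x₀, J y₀⟫ = -⟪x₀, A (J y₀)⟫ := hAskew x₀ (J y₀)
    have h3 : ⟪x₀, A (J y₀)⟫ = c * ⟪x₀, J (A y₀)⟫ := by
      rw [hc y₀, real_inner_smul_right]
    linarith
  have hc2 : c * c = 1 := by
    have : ⟪x₀, J (A y₀)⟫ = c * (c * ⟪x₀, J (A y₀)⟫) := by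
      rw [← key2, ← key1]
    nlinarith [hpos]
  rcases mul_self_eq_one_iff.mp hc2 with hc1 | hcm1
  · -- c = 1 : done
    ext v
    simp only [LinearMap.comp_apply]
    rw [hc v, hc1, one_smul]
  · -- c = -1 : contradiction via curvature
    exfalso
    have hanti : ∀ v : V, A (J v) = -(J (A v)) := by
      intro v; rw [hc v, hcm1, neg_one_smul]
    have hperp : ∀ v : V, ⟪A v, J v⟫ = 0 := by
      intro v
      have h1 := hAskew (J v) v
      have h3 : ⟪A (J v), v⟫ = -⟪J (A v), v⟫ := by rw [hanti, inner_neg_left]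
      have h4 := hJskew (A v) v
      have h5 := real_inner_comm (J v) (A v)
      linarith
    apply aux_curv_contra hdim J hJiso hJ2 R hskew hpair hbianchi hkahler hsec
    intro v hv u
    have hmem : J v ∈ (Submodule.span ℝ {v, A v})ᗮ := by
      rw [perp_iff]
      constructor
      · have h1 := hJskew v v
        have h2 := real_inner_comm (J v) v
        linarith
      · exact hperp v
    exact ((hE v hv (J v)).mpr hmem).2 u
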